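/- Let ψ : ℝ → ℂ be continuous on ℝ∖{0}, bounded near 0, and suppose there are constants ψ₊, ψ₋ ∈ ℂ with |ψ(x) − ψ_±·|x|^{−1/2}| ≤ C·|x|^{−1} for ±x ≥ 1. Then, as h → 0⁺, the function u₀(x) = h^{−1/2} ψ(x/h) satisfies ‖u₀‖_{L²(−1,1)} = √(|ψ₊|² + |ψ₋|²)·√(log(1/h)) + O(1). -/

import Mathlib

open MeasureTheory Real

lemma aux_sqrt_diff (a b : ℝ) (ha : 0 ≤ a) (hb : 0 ≤ b) :
    |Real.sqrt a - Real.sqrt b| ≤ Real.sqrt |a - b| := by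
  have key : ∀ x y : ℝ, 0 ≤ x → 0 ≤ y → x ≤ y →
      Real.sqrt y - Real.sqrt x ≤ Real.sqrt (y - x) := by
    intro x y hx hy hxy
    nlinarith [Real.sq_sqrt hx, Real.sq_sqrt hy, Real.sq_sqrt (by linarith : (0:ℝ) ≤ y - x),
      Real.sqrt_nonneg x, Real.sqrt_nonneg y, Real.sqrt_nonneg (y - x),
      mul_nonneg (Real.sqrt_nonneg (y-x)) (Real.sqrt_nonneg x)]
  rcases le_total a b with h | h
  · rw [abs_of_nonpos (by simpa using Real.sqrt_le_sqrt h),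
      abs_of_nonpos (by linarith : a - b ≤ 0)]
    simp only [neg_sub]
    have := key a b ha hb h
    linarith
  · rw [abs_of_nonneg (by simpa using Real.sqrt_le_sqrt h),
      abs_of_nonneg (by linarith : 0 ≤ a - b)]
    exact key b a hb ha h

lemma aux_abs3 {x y z ex ey ez : ℝ} (hx : |x| ≤ ex) (hy : |y| ≤ ey) (hz : |z| ≤ ez) :
    |x + y + z| ≤ ex + ey + ez := by
  calc |x + y + z| ≤ |x + y| + |z| := abs_add_le _ _
    _ ≤ |x| + |y| + |z| := by linarith [abs_add_le x y]
    _ ≤ ex + ey + ez := by linarith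

lemma aux_tail (f : ℝ → ℂ) (a : ℂ) (C : ℝ) (hC : 0 ≤ C)
    (hcont : ContinuousOn (fun y => ‖f y‖ ^ 2) (Set.Ici (1:ℝ)))
    (htail : ∀ y : ℝ, 1 ≤ y → ‖f y - a * ((y ^ (-(1:ℝ)/2) : ℝ) : ℂ)‖ ≤ C / y)
    (b : ℝ) (hb : 1 ≤ b) :
    |(∫ y in (1:ℝ)..b, ‖f y‖ ^ 2) - ‖a‖ ^ 2 * Real.log b| ≤ 2 * (C ^ 2 + 2 * C * ‖a‖) := by
  set K := C ^ 2 + 2 * C * ‖a‖ with hK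
  have hK0 : 0 ≤ K := by positivity
  have h0 : (0:ℝ) ∉ Set.uIcc 1 b := by
    rw [Set.uIcc_of_le hb, Set.mem_Icc]; push_neg; intro h; linarith
  have hpt : ∀ y : ℝ, 1 ≤ y → |‖f y‖ ^ 2 - ‖a‖ ^ 2 * (1 / y)| ≤ K * y ^ (-(3:ℝ)/2) := by
    intro y hy
    have hy0 : (0:ℝ) < y := by linarith
    set v : ℂ := a * ((y ^ (-(1:ℝ)/2) : ℝ) : ℂ) with hv
    have hvn : ‖v‖ = ‖a‖ * y ^ (-(1:ℝ)/2) := by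
      rw [hv, norm_mul, Complex.norm_real, Real.norm_eq_abs,
        abs_of_nonneg (Real.rpow_nonneg hy0.le _)]
    have hsq : (y ^ (-(1:ℝ)/2)) ^ (2:ℕ) = 1 / y := by
      rw [← Real.rpow_natCast (y ^ (-(1:ℝ)/2)) 2, ← Real.rpow_mul hy0.le]
      norm_num [Real.rpow_neg_one]
    have hv2 : ‖v‖ ^ 2 = ‖a‖ ^ 2 * (1 / y) := by rw [hvn, mul_pow, hsq]
    have hd : ‖f y - v‖ ≤ C / y := htail y hy
    have h1 : ‖f y‖ ≤ ‖v‖ + C / y := by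
      have := norm_sub_norm_le (f y) v; linarith
    have h2 : ‖v‖ - C / y ≤ ‖f y‖ := by
      have := norm_sub_norm_le v (f y)
      rw [norm_sub_rev] at this; linarith
    have hstep : |‖f y‖ ^ 2 - ‖v‖ ^ 2| ≤ 2 * ‖v‖ * (C / y) + (C / y) ^ 2 := by
      rw [abs_le]
      constructor <;> nlinarith [norm_nonneg (f y), norm_nonneg v, div_nonneg hC hy0.le]
    have e1 : y ^ (-(1:ℝ)/2) * (1 / y) = y ^ (-(3:ℝ)/2) := by
      rw [one_div, ← Real.rpow_neg_one y, ← Real.rpow_add hy0]; norm_num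
    have e2 : (C / y) ^ 2 ≤ C ^ 2 * y ^ (-(3:ℝ)/2) := by
      have hyy : (1 / y) ^ (2:ℕ) = y ^ (-(2:ℝ)) := by
        rw [one_div, ← Real.rpow_neg_one y, ← Real.rpow_natCast (y ^ (-(1:ℝ))) 2,
          ← Real.rpow_mul hy0.le]
        norm_num
      have hle : y ^ (-(2:ℝ)) ≤ y ^ (-(3:ℝ)/2) :=
        Real.rpow_le_rpow_of_exponent_le hy (by norm_num)
      calc (C / y) ^ 2 = C ^ 2 * (1 / y) ^ (2:ℕ) := by ring
        _ = C ^ 2 * y ^ (-(2:ℝ)) := by rw [hyy]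
        _ ≤ C ^ 2 * y ^ (-(3:ℝ)/2) := by nlinarith [sq_nonneg C]
    have e3 : 2 * ‖v‖ * (C / y) = 2 * C * ‖a‖ * y ^ (-(3:ℝ)/2) := by
      rw [hvn, ← e1]; field_simp
    calc |‖f y‖ ^ 2 - ‖a‖ ^ 2 * (1 / y)| = |‖f y‖ ^ 2 - ‖v‖ ^ 2| := by rw [hv2]
      _ ≤ 2 * ‖v‖ * (C / y) + (C / y) ^ 2 := hstep
      _ ≤ 2 * C * ‖a‖ * y ^ (-(3:ℝ)/2) + C ^ 2 * y ^ (-(3:ℝ)/2) := by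
          rw [← e3]; linarith
      _ = K * y ^ (-(3:ℝ)/2) := by rw [hK]; ring
  have hint_g : IntervalIntegrable (fun y => ‖f y‖ ^ 2) volume 1 b :=
    (hcont.mono (by rw [Set.uIcc_of_le hb]; exact fun x hx => hx.1)).intervalIntegrable
  have hint_inv : IntervalIntegrable (fun y : ℝ => ‖a‖ ^ 2 * (1 / y)) volume 1 b := by
    apply ContinuousOn.intervalIntegrable
    refine continuousOn_const.mul (continuousOn_const.div continuousOn_id ?_)
    intro x hx
    rw [Set.uIcc_of_le hb] at hx
    have : (1:ℝ) ≤ x := hx.1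
    intro hx0
    rw [hx0] at this
    linarith
  have hint_r : IntervalIntegrable (fun y : ℝ => K * y ^ (-(3:ℝ)/2)) volume 1 b :=
    (intervalIntegral.intervalIntegrable_rpow (Or.inr h0)).const_mul K
  have hlog : ‖a‖ ^ 2 * Real.log b = ∫ y in (1:ℝ)..b, ‖a‖ ^ 2 * (1 / y) := by
    rw [intervalIntegral.integral_const_mul, integral_one_div h0, div_one]
  have hdiff : (∫ y in (1:ℝ)..b, ‖f y‖ ^ 2) - ‖a‖ ^ 2 * Real.log b
      = ∫ y in (1:ℝ)..b, (‖f y‖ ^ 2 - ‖a‖ ^ 2 * (1 / y)) := by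
    rw [intervalIntegral.integral_sub hint_g hint_inv, hlog]
  rw [hdiff]
  have hbnd : |∫ y in (1:ℝ)..b, (‖f y‖ ^ 2 - ‖a‖ ^ 2 * (1 / y))|
      ≤ |∫ y in (1:ℝ)..b, K * y ^ (-(3:ℝ)/2)| := by
    rw [← Real.norm_eq_abs]
    apply intervalIntegral.norm_integral_le_abs_of_norm_le _ hint_r
    filter_upwards [ae_restrict_mem measurableSet_uIoc] with t ht
    rw [Set.uIoc_of_le hb] at ht
    rw [Real.norm_eq_abs]
    exact hpt t ht.1.le
  have hval : |∫ y in (1:ℝ)..b, K * y ^ (-(3:ℝ)/2)| ≤ 2 * K := by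
    rw [intervalIntegral.integral_const_mul, integral_rpow (Or.inr ⟨by norm_num, h0⟩)]
    have e : -(3:ℝ)/2 + 1 = -(1/2) := by norm_num
    rw [e, Real.one_rpow, abs_mul]
    have h1 : (0:ℝ) ≤ b ^ (-(1/2):ℝ) := Real.rpow_nonneg (by linarith) _
    have h2 : b ^ (-(1/2):ℝ) ≤ 1 := Real.rpow_le_one_of_one_le_of_nonpos hb (by norm_num)
    have habs : |(b ^ (-(1/2):ℝ) - 1) / (-(1/2):ℝ)| ≤ 2 := by
      rw [abs_div, abs_of_nonpos (by linarith : b ^ (-(1/2):ℝ) - 1 ≤ 0),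
        abs_of_nonpos (by norm_num : (-(1/2):ℝ) ≤ 0)]
      rw [div_le_iff₀ (by norm_num : (0:ℝ) < -(-(1/2):ℝ))]
      linarith
    calc |K| * |(b ^ (-(1/2):ℝ) - 1) / (-(1/2):ℝ)| ≤ K * 2 := by
          rw [abs_of_nonneg hK0]
          exact mul_le_mul_of_nonneg_left habs hK0
      _ = 2 * K := by ring
  linarith

/-- L² mass of the quasimode u₀(x) = h^{-1/2} ψ(x/h): if ψ has |x|^{-1/2} tails
with coefficients ψ±, then ‖u₀‖_{L²(-1,1)} = √(|ψ₊|²+|ψ₋|²)·√(log(1/h)) + O(1). -/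
theorem stmt_13 (ψ : ℝ → ℂ) (ψplus ψminus : ℂ) (C : ℝ)
    (hcont : ContinuousOn ψ {x : ℝ | x ≠ 0})
    (hbdd : ∃ M δ : ℝ, 0 < δ ∧ ∀ x : ℝ, x ≠ 0 → |x| ≤ δ → ‖ψ x‖ ≤ M)
    (htail_plus : ∀ x : ℝ, 1 ≤ x →
      ‖ψ x - ψplus * ((|x| ^ (-(1:ℝ)/2) : ℝ) : ℂ)‖ ≤ C / |x|)
    (htail_minus : ∀ x : ℝ, x ≤ -1 →
      ‖ψ x - ψminus * ((|x| ^ (-(1:ℝ)/2) : ℝ) : ℂ)‖ ≤ C / |x|) :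
    ∃ C' > 0, ∀ h : ℝ, h ∈ Set.Ioo (0:ℝ) 1 →
      |Real.sqrt (∫ x in Set.Ioo (-1:ℝ) 1, ‖((h ^ (-(1:ℝ)/2) : ℝ) : ℂ) * ψ (x / h)‖ ^ 2)
        - Real.sqrt (‖ψplus‖ ^ 2 + ‖ψminus‖ ^ 2) * Real.sqrt (Real.log (1 / h))| ≤ C' := by
  obtain ⟨M, δ, hδ0, hM⟩ := hbdd
  have hC0 : 0 ≤ C := by
    have h2 := (norm_nonneg _).trans (htail_plus 1 le_rfl)
    rwa [abs_one, div_one] at h2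
  have hne : {x : ℝ | x ≠ 0} =ᵐ[volume] (Set.univ : Set ℝ) := by
    rw [ae_eq_univ]
    have h1 : {x : ℝ | x ≠ 0}ᶜ = {(0:ℝ)} := by ext x; simp [not_not]
    rw [h1]
    exact measure_singleton 0
  have hψm : AEStronglyMeasurable ψ volume := by
    have h1 : AEStronglyMeasurable ψ (volume.restrict {x : ℝ | x ≠ 0}) :=
      hcont.aestronglyMeasurable isOpen_ne.measurableSet
    rwa [Measure.restrict_congr_set hne, Measure.restrict_univ] at h1
  have hgm : AEStronglyMeasurable (fun y : ℝ => ‖ψ y‖ ^ 2) volume := by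
    exact hψm.norm.pow 2
  have hgc : ContinuousOn (fun y : ℝ => ‖ψ y‖ ^ 2) {x : ℝ | x ≠ 0} := (hcont.norm).pow 2
  -- bound on the middle interval
  have hKcpt : IsCompact (Set.Icc (-1:ℝ) 1 ∩ {x : ℝ | δ ≤ |x|}) :=
    isCompact_Icc.inter_right (isClosed_le continuous_const continuous_abs)
  obtain ⟨M₂, hM₂⟩ := hKcpt.exists_bound_of_continuousOn
    (hcont.mono (fun x hx => by
      have : δ ≤ |x| := hx.2
      simp only [Set.mem_setOf_eq]
      intro hc
      rw [hc] at this
      simp at this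
      linarith))
  set M' : ℝ := max M M₂ with hM'def
  have hψbd : ∀ x : ℝ, x ≠ 0 → x ∈ Set.Icc (-1:ℝ) 1 → ‖ψ x‖ ≤ M' := by
    intro x hx0 hx
    rcases le_total |x| δ with hc | hc
    · exact (hM x hx0 hc).trans (le_max_left _ _)
    · exact (hM₂ x ⟨hx, hc⟩).trans (le_max_right _ _)
  have hgbd : ∀ x : ℝ, x ≠ 0 → x ∈ Set.Icc (-1:ℝ) 1 → |‖ψ x‖ ^ 2| ≤ M' ^ 2 := by
    intro x hx0 hx
    rw [abs_of_nonneg (by positivity)]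
    exact pow_le_pow_left₀ (norm_nonneg _) (hψbd x hx0 hx) 2
  have hne0 : ∀ᵐ x : ℝ ∂volume, x ≠ 0 := by
    have h1 : {x : ℝ | ¬ x ≠ 0} = {(0:ℝ)} := by ext x; simp [not_not]
    rw [ae_iff, h1]
    exact measure_singleton 0
  have hmid_int : IntervalIntegrable (fun y : ℝ => ‖ψ y‖ ^ 2) volume (-1) 1 := by
    rw [intervalIntegrable_iff_integrableOn_Ioc_of_le (by norm_num : (-1:ℝ) ≤ 1)]
    apply Integrable.mono' (g := fun _ : ℝ => M' ^ 2)
      (integrableOn_const measure_Ioc_lt_top.ne) hgm.restrict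
    filter_upwards [ae_restrict_mem measurableSet_Ioc, ae_restrict_of_ae hne0] with x hx hx0
    rw [Real.norm_eq_abs]
    exact hgbd x hx0 ⟨hx.1.le, hx.2⟩
  have hmid_bd : |∫ y in (-1:ℝ)..1, ‖ψ y‖ ^ 2| ≤ M' ^ 2 * 2 := by
    have hb2 := intervalIntegral.norm_integral_le_of_norm_le_const_ae
      (C := M' ^ 2) (f := fun y : ℝ => ‖ψ y‖ ^ 2) (a := -1) (b := 1) ?_
    · rw [Real.norm_eq_abs] at hb2
      convert hb2 using 2
      norm_num
    · filter_upwards [hne0] with x hx0 hx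
      rw [Set.uIoc_of_le (by norm_num : (-1:ℝ) ≤ 1)] at hx
      rw [Real.norm_eq_abs]
      exact hgbd x hx0 ⟨hx.1.le, hx.2⟩
  -- tails hypotheses
  have hIci : Set.Ici (1:ℝ) ⊆ {x : ℝ | x ≠ 0} :=
    fun x hx => ne_of_gt (lt_of_lt_of_le one_pos hx)
  have hcontp : ContinuousOn (fun y : ℝ => ‖ψ y‖ ^ 2) (Set.Ici (1:ℝ)) := hgc.mono hIci
  have hcontm : ContinuousOn (fun t : ℝ => ‖ψ (-t)‖ ^ 2) (Set.Ici (1:ℝ)) := by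
    have hmap : Set.MapsTo (fun t : ℝ => -t) (Set.Ici (1:ℝ)) {x : ℝ | x ≠ 0} := by
      intro x hx
      simp only [Set.mem_setOf_eq]
      have : (1:ℝ) ≤ x := hx
      intro hc
      rw [neg_eq_zero] at hc
      rw [hc] at this
      linarith
    have h2 : ContinuousOn (fun t : ℝ => ψ (-t)) (Set.Ici (1:ℝ)) :=
      hcont.comp continuous_neg.continuousOn hmap
    exact (h2.norm).pow 2
  have htailp : ∀ y : ℝ, 1 ≤ y → ‖ψ y - ψplus * ((y ^ (-(1:ℝ)/2) : ℝ) : ℂ)‖ ≤ C / y := by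
    intro y hy
    have h2 := htail_plus y hy
    rwa [abs_of_pos (by linarith)] at h2
  have htailm : ∀ y : ℝ, 1 ≤ y →
      ‖ψ (-y) - ψminus * ((y ^ (-(1:ℝ)/2) : ℝ) : ℂ)‖ ≤ C / y := by
    intro y hy
    have h2 := htail_minus (-y) (by linarith)
    rwa [abs_neg, abs_of_pos (by linarith)] at h2
  -- the constant
  refine ⟨Real.sqrt (2 * (C ^ 2 + 2 * C * ‖ψminus‖) + M' ^ 2 * 2
      + 2 * (C ^ 2 + 2 * C * ‖ψplus‖)) + 1, by positivity, ?_⟩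
  intro h hh
  obtain ⟨hh0, hh1⟩ := hh
  have hhne : h ≠ 0 := ne_of_gt hh0
  set b : ℝ := 1 / h with hbdef
  have hb1 : 1 ≤ b := by
    rw [hbdef, le_div_iff₀ hh0]
    linarith
  -- change of variables
  have hpow : (h ^ (-(1:ℝ)/2)) ^ (2:ℕ) = h⁻¹ := by
    rw [← Real.rpow_natCast (h ^ (-(1:ℝ)/2)) 2, ← Real.rpow_mul hh0.le]
    norm_num [Real.rpow_neg_one]
  have hptw : ∀ x : ℝ, ‖((h ^ (-(1:ℝ)/2) : ℝ) : ℂ) * ψ (x / h)‖ ^ 2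
      = h⁻¹ * ‖ψ (x / h)‖ ^ 2 := by
    intro x
    rw [norm_mul, mul_pow, Complex.norm_real, Real.norm_eq_abs,
      abs_of_nonneg (Real.rpow_nonneg hh0.le _), hpow]
  have hchg : (∫ x in Set.Ioo (-1:ℝ) 1, ‖((h ^ (-(1:ℝ)/2) : ℝ) : ℂ) * ψ (x / h)‖ ^ 2)
      = ∫ y in (-b)..b, ‖ψ y‖ ^ 2 := by
    simp_rw [hptw]
    rw [← integral_Ioc_eq_integral_Ioo,
      ← intervalIntegral.integral_of_le (by norm_num : (-1:ℝ) ≤ 1),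
      intervalIntegral.integral_const_mul,
      intervalIntegral.integral_comp_div (c := h) (fun y : ℝ => ‖ψ y‖ ^ 2) hhne,
      smul_eq_mul, ← mul_assoc, inv_mul_cancel₀ hhne, one_mul]
    rw [show ((-1:ℝ)/h) = -b by rw [hbdef]; ring,
      show ((1:ℝ)/h) = b by rw [hbdef]]
  -- splitting
  have hi1 : IntervalIntegrable (fun y : ℝ => ‖ψ y‖ ^ 2) volume (-b) (-1) := by
    apply ContinuousOn.intervalIntegrable
    apply hgc.mono
    rw [Set.uIcc_of_le (by linarith : -b ≤ -1)]
    intro x hx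
    exact ne_of_lt (by linarith [hx.2] : x < 0)
  have hi3 : IntervalIntegrable (fun y : ℝ => ‖ψ y‖ ^ 2) volume 1 b := by
    apply ContinuousOn.intervalIntegrable
    apply hgc.mono
    rw [Set.uIcc_of_le hb1]
    intro x hx
    exact ne_of_gt (by linarith [hx.1] : (0:ℝ) < x)
  have hsplit : (∫ y in (-b)..b, ‖ψ y‖ ^ 2)
      = ((∫ y in (-b)..(-1:ℝ), ‖ψ y‖ ^ 2) + ∫ y in (-1:ℝ)..1, ‖ψ y‖ ^ 2)
        + ∫ y in (1:ℝ)..b, ‖ψ y‖ ^ 2 := by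
    rw [intervalIntegral.integral_add_adjacent_intervals hi1 hmid_int,
      intervalIntegral.integral_add_adjacent_intervals (hi1.trans hmid_int) hi3]
  have hneg : (∫ y in (-b)..(-1:ℝ), ‖ψ y‖ ^ 2) = ∫ t in (1:ℝ)..b, ‖ψ (-t)‖ ^ 2 := by
    rw [intervalIntegral.integral_comp_neg (fun y : ℝ => ‖ψ y‖ ^ 2)]
  have hP := aux_tail ψ ψplus C hC0 hcontp htailp b hb1
  have hQ := aux_tail (fun t => ψ (-t)) ψminus C hC0 hcontm htailm b hb1
  have hT : |(∫ y in (-b)..b, ‖ψ y‖ ^ 2)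
      - (‖ψplus‖ ^ 2 + ‖ψminus‖ ^ 2) * Real.log b|
      ≤ 2 * (C ^ 2 + 2 * C * ‖ψminus‖) + M' ^ 2 * 2
        + 2 * (C ^ 2 + 2 * C * ‖ψplus‖) := by
    rw [hsplit, hneg]
    have e : ((∫ t in (1:ℝ)..b, ‖ψ (-t)‖ ^ 2) + ∫ y in (-1:ℝ)..1, ‖ψ y‖ ^ 2)
          + (∫ y in (1:ℝ)..b, ‖ψ y‖ ^ 2)
          - (‖ψplus‖ ^ 2 + ‖ψminus‖ ^ 2) * Real.log b
        = ((∫ t in (1:ℝ)..b, ‖ψ (-t)‖ ^ 2) - ‖ψminus‖ ^ 2 * Real.log b)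
          + (∫ y in (-1:ℝ)..1, ‖ψ y‖ ^ 2)
          + ((∫ y in (1:ℝ)..b, ‖ψ y‖ ^ 2) - ‖ψplus‖ ^ 2 * Real.log b) := by ring
    rw [e]
    exact aux_abs3 hQ hmid_bd hP
  -- conclude
  rw [hchg]
  have hL0 : (0:ℝ) ≤ Real.log b := Real.log_nonneg hb1
  have hsqm : Real.sqrt (‖ψplus‖ ^ 2 + ‖ψminus‖ ^ 2) * Real.sqrt (Real.log b)
      = Real.sqrt ((‖ψplus‖ ^ 2 + ‖ψminus‖ ^ 2) * Real.log b) :=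
    (Real.sqrt_mul (by positivity) _).symm
  rw [hsqm]
  have hT0 : (0:ℝ) ≤ ∫ y in (-b)..b, ‖ψ y‖ ^ 2 :=
    intervalIntegral.integral_nonneg (by linarith) (fun x _ => by positivity)
  have habs := aux_sqrt_diff (∫ y in (-b)..b, ‖ψ y‖ ^ 2)
    ((‖ψplus‖ ^ 2 + ‖ψminus‖ ^ 2) * Real.log b) hT0 (by positivity)
  refine habs.trans ?_
  have hmono := Real.sqrt_le_sqrt hT
  linarith
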